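/- Let x₁,…,xₙ be positive reals with censoring indicators δᵢ ∈ {0,1}, m = ∑ δᵢ, and fix r > −1, q ∈ ℝ, p ≥ 0. Then the double integral ∫₀^∞ ∫₀^∞ exp(−p/β) η^(mβ+r) β^(m+q) (∏ x_i^{δᵢβ}) exp(−(∑ x_i^β) η^β) dη dβ is infinite. -/

import Mathlib

open MeasureTheory Set Finset

lemma aux_rpow_inf : ∫⁻ β in Ioo (0:ℝ) 1, ENNReal.ofReal (β ^ (-2:ℝ)) = ⊤ := by
  by_contra h
  have hfin : ∫⁻ β in Ioo (0:ℝ) 1, ENNReal.ofReal (β ^ (-2:ℝ)) < ⊤ := lt_top_iff_ne_top.2 h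
  have hmeas : AEStronglyMeasurable (fun β : ℝ => β ^ (-2:ℝ)) (volume.restrict (Ioo 0 1)) :=
    (continuousOn_id.rpow_const (fun y hy => Or.inl (ne_of_gt hy.1))).aestronglyMeasurable
      measurableSet_Ioo
  have hnn : 0 ≤ᵐ[volume.restrict (Ioo (0:ℝ) 1)] fun β : ℝ => β ^ (-2:ℝ) := by
    filter_upwards [ae_restrict_mem measurableSet_Ioo] with y hy
    exact Real.rpow_nonneg hy.1.le _
  have hint : IntegrableOn (fun β : ℝ => β ^ (-2:ℝ)) (Ioo 0 1) :=
    ⟨hmeas, (hasFiniteIntegral_iff_ofReal hnn).2 hfin⟩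
  have := (intervalIntegral.integrableOn_Ioo_rpow_iff zero_lt_one).1 hint
  linarith

theorem stmt_9 (n : ℕ) (x : Fin n → ℝ) (hx : ∀ i, 0 < x i) (δ : Fin n → ℕ)
    (hδ : ∀ i, δ i = 0 ∨ δ i = 1) (m : ℕ) (hm : m = ∑ i, δ i) 
    (r q p : ℝ) (hr : -1 < r) (hp : 0 ≤ p) :
    (∫⁻ β in Ioi (0:ℝ), ∫⁻ η in Ioi (0:ℝ),
        ENNReal.ofReal (Real.exp (-p / β) * η ^ ((m : ℝ) * β + r) * β ^ ((m : ℝ) + q) *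
          (∏ i, x i ^ ((δ i : ℝ) * β)) * Real.exp (-(∑ i, x i ^ β) * η ^ β))) = ⊤ := by
  -- Setup of constants
  set a : ℝ := min r 0 + 1 with ha_def
  have ha : 0 < a := by
    have h1 : -1 < min r 0 := lt_min hr (by norm_num)
    simp only [ha_def]; linarith
  have ha1 : a ≤ 1 := by
    have := min_le_right r 0; simp only [ha_def]; linarith
  have har : a - 1 ≤ r := by
    have := min_le_left r 0; simp only [ha_def]; linarith
  set K : ℝ := (p + 1) / a with hK_def
  have hK1 : 1 ≤ K := by
    rw [hK_def, le_div_iff₀ ha]; nlinarith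
  have hKa : a * K = p + 1 := by
    rw [hK_def]; field_simp
  set C : ℝ := ∑ i, max (x i) 1 with hC_def
  have hC0 : 0 ≤ C := Finset.sum_nonneg fun i _ => le_trans zero_le_one (le_max_right _ _)
  set D : ℝ := ∏ i, min (x i) 1 with hD_def
  have hD : 0 < D := Finset.prod_pos fun i _ => lt_min (hx i) one_pos
  set E : ℝ := Real.exp (-(C * Real.exp K)) with hE_def
  have hE : 0 < E := Real.exp_pos _
  set c : ℝ := D * E / 2 with hc_def
  have hc : 0 < c := by positivity
  set M : ℝ := max ((m : ℝ) + q) 0 with hM_def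
  have hM0 : 0 ≤ M := le_max_right _ _
  set N : ℕ := ⌈M⌉₊ + 2 with hN_def
  have hNM : M + 2 ≤ (N : ℝ) := by
    have := Nat.le_ceil M
    rw [hN_def]; push_cast; linarith
  set c' : ℝ := c / (N.factorial : ℝ) with hc'_def
  have hc' : 0 < c' := by
    have : (0:ℝ) < N.factorial := by exact_mod_cast N.factorial_pos
    positivity
  rw [eq_top_iff]
  -- Key lower bound for the inner integral, for β ∈ (0,1)
  have key : ∀ β ∈ Ioo (0:ℝ) 1,
      ENNReal.ofReal (c' * β ^ (-2:ℝ)) ≤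
      ∫⁻ η in Ioi (0:ℝ),
        ENNReal.ofReal (Real.exp (-p / β) * η ^ ((m : ℝ) * β + r) * β ^ ((m : ℝ) + q) *
          (∏ i, x i ^ ((δ i : ℝ) * β)) * Real.exp (-(∑ i, x i ^ β) * η ^ β)) := by
    intro β hβ
    obtain ⟨hβ0, hβ1⟩ := hβ
    set T : ℝ := Real.exp (K / β) with hT_def
    have hT0 : 0 < T := Real.exp_pos _
    have hKβ : 1 < K / β := by
      rw [lt_div_iff₀ hβ0]; nlinarith
    have hT2 : 2 < T := by
      have h1 : Real.exp 1 < T := by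
        rw [hT_def]; exact Real.exp_lt_exp.2 hKβ
      have := Real.exp_one_gt_d9
      linarith
    set L : ℝ := Real.exp (-p / β) * T ^ (a - 1) * β ^ M * D * E with hL_def
    have hL0 : 0 ≤ L := by
      have h1 : (0:ℝ) < T ^ (a - 1) := Real.rpow_pos_of_pos hT0 _
      have h2 : (0:ℝ) < β ^ M := Real.rpow_pos_of_pos hβ0 _
      have h3 := Real.exp_pos (-p / β)
      rw [hL_def]; positivity
    calc ENNReal.ofReal (c' * β ^ (-2:ℝ))
        ≤ ENNReal.ofReal (L * (T / 2)) := by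
          apply ENNReal.ofReal_le_ofReal
          -- L * (T/2) = c * β^M * exp(1/β)
          have hTa : T ^ (a - 1) * T ^ (1:ℝ) = T ^ a := by
            rw [← Real.rpow_add hT0]; ring_nf
          have hTexp : T ^ a = Real.exp ((p + 1) / β) := by
            have hKa' : K * a = p + 1 := by linarith [hKa]
            rw [hT_def, ← Real.exp_mul]
            congr 1
            rw [div_mul_eq_mul_div, hKa']
          have hEE : Real.exp (-p / β) * Real.exp ((p + 1) / β) = Real.exp (1 / β) := by
            rw [← Real.exp_add]; congr 1; rw [← add_div]; ring_nf
          have hkey : L * (T / 2) = c * (β ^ M * Real.exp (1 / β)) := by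
            have h1 : L * (T / 2) =
                Real.exp (-p / β) * (T ^ (a - 1) * T ^ (1:ℝ)) * β ^ M * D * E / 2 := by
              rw [hL_def, Real.rpow_one]; ring
            rw [h1, hTa, hTexp, hc_def,
              show Real.exp (1 / β) = Real.exp (-p / β) * Real.exp ((p + 1) / β) from hEE.symm]
            ring
          rw [hkey]
          -- now c' * β^(-2) ≤ c * (β^M * exp(1/β))
          have hfac : (0:ℝ) < (N.factorial : ℝ) := by exact_mod_cast N.factorial_pos
          have hβM : (0:ℝ) < β ^ M := Real.rpow_pos_of_pos hβ0 _
          have hpow : (1 / β) ^ N = β ^ (-(N:ℝ)) := by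
            rw [Real.rpow_neg hβ0.le, Real.rpow_natCast, one_div, inv_pow]
          have hexpN : (1 / β) ^ N / (N.factorial : ℝ) ≤ Real.exp (1 / β) :=
            Real.pow_div_factorial_le_exp (x := 1/β) (by positivity) N
          have hsplit : β ^ (M - (N:ℝ)) = β ^ M * β ^ (-(N:ℝ)) := by
            rw [← Real.rpow_add hβ0]; ring_nf
          have hmono : β ^ (-2:ℝ) ≤ β ^ (M - (N:ℝ)) :=
            Real.rpow_le_rpow_of_exponent_ge hβ0 hβ1.le (by linarith)
          calc c' * β ^ (-2:ℝ) ≤ c' * β ^ (M - (N:ℝ)) :=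
                mul_le_mul_of_nonneg_left hmono hc'.le
            _ = c * (β ^ M * ((1 / β) ^ N / (N.factorial : ℝ))) := by
                rw [hsplit, hpow, hc'_def]; field_simp; try ring
            _ ≤ c * (β ^ M * Real.exp (1 / β)) := by
                apply mul_le_mul_of_nonneg_left _ hc.le
                exact mul_le_mul_of_nonneg_left hexpN hβM.le
      _ = ENNReal.ofReal L * volume (Ioo (T/2) T) := by
          rw [Real.volume_Ioo, ← ENNReal.ofReal_mul hL0]
          congr 1; ring_nf
      _ = ∫⁻ _ in Ioo (T/2) T, ENNReal.ofReal L := by rw [setLIntegral_const]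
      _ ≤ ∫⁻ η in Ioo (T/2) T,
            ENNReal.ofReal (Real.exp (-p / β) * η ^ ((m : ℝ) * β + r) * β ^ ((m : ℝ) + q) *
              (∏ i, x i ^ ((δ i : ℝ) * β)) * Real.exp (-(∑ i, x i ^ β) * η ^ β)) := by
          apply setLIntegral_mono' measurableSet_Ioo
          intro η hη
          apply ENNReal.ofReal_le_ofReal
          have hη1 : 1 ≤ η := by
            have : (1:ℝ) ≤ T / 2 := by linarith
            linarith [hη.1]
          have hη0 : 0 < η := lt_of_lt_of_le zero_lt_one hη1
          -- factor 2 : T^(a-1) ≤ η^(mβ+r)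
          have b2 : T ^ (a - 1) ≤ η ^ ((m : ℝ) * β + r) := by
            have h1 : η ^ (a - 1) ≤ η ^ ((m : ℝ) * β + r) := by
              apply Real.rpow_le_rpow_of_exponent_le hη1
              have : (0:ℝ) ≤ (m : ℝ) * β := by positivity
              linarith
            have h2 : T ^ (a - 1) ≤ η ^ (a - 1) :=
              Real.rpow_le_rpow_of_nonpos hη0 hη.2.le (by linarith)
            linarith
          -- factor 3 : β^M ≤ β^(m+q)
          have b3 : β ^ M ≤ β ^ ((m : ℝ) + q) :=
            Real.rpow_le_rpow_of_exponent_ge hβ0 hβ1.le (le_max_left _ _)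
          -- factor 4 : D ≤ ∏ x i ^ (δ i β)
          have b4 : D ≤ ∏ i, x i ^ ((δ i : ℝ) * β) := by
            rw [hD_def]
            apply Finset.prod_le_prod (fun i _ => le_min (hx i).le zero_le_one)
            intro i _
            rcases hδ i with h | h
            · simp only [h, Nat.cast_zero, zero_mul, Real.rpow_zero]
              exact min_le_right _ _
            · simp only [h, Nat.cast_one, one_mul]
              rcases le_total (x i) 1 with hx1 | hx1
              · calc min (x i) 1 ≤ x i := min_le_left _ _
                  _ = x i ^ (1:ℝ) := (Real.rpow_one _).symm
                  _ ≤ x i ^ β := Real.rpow_le_rpow_of_exponent_ge (hx i) hx1 hβ1.le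
              · calc min (x i) 1 ≤ 1 := min_le_right _ _
                  _ ≤ x i ^ β := Real.one_le_rpow hx1 hβ0.le
          -- factor 5 : E ≤ exp(- S η^β)
          have b5 : E ≤ Real.exp (-(∑ i, x i ^ β) * η ^ β) := by
            rw [hE_def]
            apply Real.exp_le_exp.2
            have hS : (∑ i, x i ^ β) ≤ C := by
              rw [hC_def]
              apply Finset.sum_le_sum
              intro i _
              rcases le_total (x i) 1 with hx1 | hx1
              · exact le_trans (Real.rpow_le_one (hx i).le hx1 hβ0.le) (le_max_right _ _)
              · calc x i ^ β ≤ x i ^ (1:ℝ) :=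
                    Real.rpow_le_rpow_of_exponent_le hx1 hβ1.le
                  _ = x i := Real.rpow_one _
                  _ ≤ max (x i) 1 := le_max_left _ _
            have hSnn : 0 ≤ ∑ i, x i ^ β :=
              Finset.sum_nonneg fun i _ => (Real.rpow_pos_of_pos (hx i) β).le
            have hηβ : η ^ β ≤ Real.exp K := by
              have h1 : η ^ β ≤ T ^ β := Real.rpow_le_rpow hη0.le hη.2.le hβ0.le
              have h2 : T ^ β = Real.exp K := by
                rw [hT_def, ← Real.exp_mul, div_mul_cancel₀ _ hβ0.ne']
              linarith
            have hηβnn : 0 ≤ η ^ β := (Real.rpow_pos_of_pos hη0 β).le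
            have : (∑ i, x i ^ β) * η ^ β ≤ C * Real.exp K :=
              mul_le_mul hS hηβ hηβnn hC0
            linarith
          -- combine
          rw [hL_def]
          have e1 : (0:ℝ) < Real.exp (-p / β) := Real.exp_pos _
          have e2 : (0:ℝ) < T ^ (a - 1) := Real.rpow_pos_of_pos hT0 _
          have e3 : (0:ℝ) < β ^ M := Real.rpow_pos_of_pos hβ0 _
          have e4 : (0:ℝ) < η ^ ((m : ℝ) * β + r) := Real.rpow_pos_of_pos hη0 _
          have e5 : (0:ℝ) < β ^ ((m : ℝ) + q) := Real.rpow_pos_of_pos hβ0 _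
          have e6 : (0:ℝ) < ∏ i, x i ^ ((δ i : ℝ) * β) :=
            Finset.prod_pos fun i _ => Real.rpow_pos_of_pos (hx i) _
          gcongr
      _ ≤ ∫⁻ η in Ioi (0:ℝ),
            ENNReal.ofReal (Real.exp (-p / β) * η ^ ((m : ℝ) * β + r) * β ^ ((m : ℝ) + q) *
              (∏ i, x i ^ ((δ i : ℝ) * β)) * Real.exp (-(∑ i, x i ^ β) * η ^ β)) := by
          apply lintegral_mono_set
          intro y hy
          have : 0 < T / 2 := by linarith
          exact lt_trans this hy.1
  calc (⊤ : ENNReal) = ∫⁻ β in Ioo (0:ℝ) 1, ENNReal.ofReal (c' * β ^ (-2:ℝ)) := by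
        have : ∀ β : ℝ, ENNReal.ofReal (c' * β ^ (-2:ℝ)) =
            ENNReal.ofReal c' * ENNReal.ofReal (β ^ (-2:ℝ)) := fun β =>
          ENNReal.ofReal_mul hc'.le
        simp_rw [this]
        rw [lintegral_const_mul' _ _ ENNReal.ofReal_ne_top, aux_rpow_inf,
          ENNReal.mul_top (ENNReal.ofReal_pos.2 hc').ne']
    _ ≤ ∫⁻ β in Ioo (0:ℝ) 1, ∫⁻ η in Ioi (0:ℝ),
          ENNReal.ofReal (Real.exp (-p / β) * η ^ ((m : ℝ) * β + r) * β ^ ((m : ℝ) + q) *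
            (∏ i, x i ^ ((δ i : ℝ) * β)) * Real.exp (-(∑ i, x i ^ β) * η ^ β)) :=
        setLIntegral_mono' measurableSet_Ioo key
    _ ≤ ∫⁻ β in Ioi (0:ℝ), ∫⁻ η in Ioi (0:ℝ),
          ENNReal.ofReal (Real.exp (-p / β) * η ^ ((m : ℝ) * β + r) * β ^ ((m : ℝ) + q) *
            (∏ i, x i ^ ((δ i : ℝ) * β)) * Real.exp (-(∑ i, x i ^ β) * η ^ β)) :=
        lintegral_mono_set (fun y hy => hy.1)
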